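/- Let n ≥ 4. Fix γ > 0 with γ ≤ min(2/(π + 3^{3/4}), 2^{(4−3n)/(n−1)}), and define, for r ∈ ℝ^{n−1} ∖ {0} and z ∈ ℝ, V(r, z) = γ((1 + |r|^{n−1})^{1/(n−1)} − 1) · arctan(z²) for z ≥ 0 and V(r, z) = 0 for z ≤ 0. Then V is C¹ on {r ≠ 0}, V(r, z) = 0 for z ≤ 0, |∇V(r, z)| ≤ |r|^{n−2} for all r ≠ 0 and z ∈ ℝ, and r · ∇_r V(r, z) ≥ |r|^{3−n} (∂_z V(r, z))² for all r ≠ 0 and z ∈ ℝ. -/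

import Mathlib

open MeasureTheory Real RealInnerProductSpace

open scoped NNReal

noncomputable section CEAux

/-- the z-profile of the potential -/
def gF (z : ℝ) : ℝ := if 0 ≤ z then Real.arctan (z ^ 2) else 0

/-- its derivative -/
def gF' (z : ℝ) : ℝ := 2 * max z 0 / (1 + z ^ 4)

lemma arctan_nonneg' {x : ℝ} (hx : 0 ≤ x) : 0 ≤ Real.arctan x := by
  rw [← Real.arctan_zero]
  exact Real.arctan_strictMono.monotone hx

lemma gF_nonneg (z : ℝ) : 0 ≤ gF z := by
  unfold gF; split_ifs with h
  · exact arctan_nonneg' (by positivity)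
  · exact le_refl 0

lemma gF_le (z : ℝ) : gF z ≤ Real.pi / 2 := by
  unfold gF; split_ifs with h
  · exact (Real.arctan_lt_pi_div_two _).le
  · positivity

lemma gF'_nonneg (z : ℝ) : 0 ≤ gF' z := by
  unfold gF'
  apply div_nonneg (mul_nonneg two_pos.le (le_max_right z 0)) (by positivity)

lemma arctan_le_self' {x : ℝ} (hx : 0 ≤ x) : Real.arctan x ≤ x := by
  have h : ∀ y : ℝ, HasDerivAt (fun s => s - Real.arctan s) (1 - 1 / (1 + y ^ 2)) y :=
    fun y => (hasDerivAt_id y).sub (Real.hasDerivAt_arctan y)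
  have hm : Monotone (fun s => s - Real.arctan s) := by
    apply monotone_of_deriv_nonneg (fun y => (h y).differentiableAt)
    intro y
    rw [(h y).deriv, sub_nonneg, div_le_one (by positivity)]
    nlinarith [sq_nonneg y]
  have h2 := hm hx
  simp only [Real.arctan_zero, sub_zero] at h2
  linarith

lemma self_div_le_arctan {x : ℝ} (hx : 0 ≤ x) : x / (1 + x ^ 2) ≤ Real.arctan x := by
  have h : ∀ y : ℝ, HasDerivAt (fun s => Real.arctan s - s / (1 + s ^ 2))
      (1 / (1 + y ^ 2) - (1 * (1 + y ^ 2) - y * (2 * y)) / (1 + y ^ 2) ^ 2) y := by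
    intro y
    have h1 : HasDerivAt (fun s : ℝ => 1 + s ^ 2) (2 * y) y := by
      simpa using (hasDerivAt_pow 2 y).const_add 1
    exact (Real.hasDerivAt_arctan y).sub ((hasDerivAt_id y).div h1 (by positivity))
  have hm : Monotone (fun s => Real.arctan s - s / (1 + s ^ 2)) := by
    apply monotone_of_deriv_nonneg (fun y => (h y).differentiableAt)
    intro y
    rw [(h y).deriv, sub_nonneg, div_le_div_iff₀ (by positivity) (by positivity)]
    nlinarith [sq_nonneg y, sq_nonneg (y ^ 2)]
  have h2 := hm hx
  simp only [Real.arctan_zero, zero_div, sub_zero, zero_sub] at h2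
  linarith


lemma hasDerivAt_gF (z : ℝ) : HasDerivAt gF (gF' z) z := by
  rcases lt_trichotomy z 0 with hz | hz | hz
  · have h0 : gF' z = 0 := by
      simp [gF', max_eq_right hz.le]
    rw [h0]
    have he : gF =ᶠ[nhds z] (fun _ => (0 : ℝ)) := by
      filter_upwards [Iio_mem_nhds hz] with w hw
      simp [gF, not_le.2 (Set.mem_Iio.mp hw)]
    exact (hasDerivAt_const z 0).congr_of_eventuallyEq he
  · subst hz
    have h0 : gF' 0 = 0 := by simp [gF']
    rw [h0, hasDerivAt_iff_isLittleO, Asymptotics.isLittleO_iff]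
    intro c hc
    filter_upwards [Metric.ball_mem_nhds (0 : ℝ) hc] with w hw
    rw [Metric.mem_ball, Real.dist_eq, sub_zero] at hw
    have hb : |gF w| ≤ w ^ 2 := by
      unfold gF; split_ifs with h
      · rw [abs_of_nonneg (arctan_nonneg' (by positivity))]
        exact arctan_le_self' (by positivity)
      · simp; positivity
    have hg0 : gF 0 = 0 := by simp [gF]
    simp only [hg0, sub_zero, smul_zero]
    rw [Real.norm_eq_abs, Real.norm_eq_abs]
    calc |gF w| ≤ w ^ 2 := hb
      _ = |w| * |w| := by rw [← abs_mul, ← sq, abs_of_nonneg (sq_nonneg w)]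
      _ ≤ c * |w| := by
          apply mul_le_mul_of_nonneg_right hw.le (abs_nonneg w)
  · have key : HasDerivAt (fun w : ℝ => Real.arctan (w ^ 2))
        (1 / (1 + (z ^ 2) ^ 2) * (2 * z ^ 1)) z := by
      have := (Real.hasDerivAt_arctan (z ^ 2)).comp z (hasDerivAt_pow 2 z)
      simpa [Function.comp_def] using this
    have he : gF =ᶠ[nhds z] (fun w : ℝ => Real.arctan (w ^ 2)) := by
      filter_upwards [Ioi_mem_nhds hz] with w hw
      simp [gF, le_of_lt (Set.mem_Ioi.mp hw)]
    have h2 := key.congr_of_eventuallyEq he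
    refine h2.congr_deriv ?_
    have : max z 0 = z := max_eq_left hz.le
    unfold gF'
    rw [this]
    have h4 : (1 : ℝ) + z ^ 4 ≠ 0 := by positivity
    have h4' : (1 : ℝ) + (z ^ 2) ^ 2 ≠ 0 := by positivity
    field_simp

lemma continuous_gF' : Continuous gF' := by
  unfold gF'
  apply Continuous.div (by continuity) (by continuity)
  intro x; positivity

lemma contDiff_gF : ContDiff ℝ 1 gF := by
  rw [contDiff_one_iff_deriv]
  refine ⟨fun z => (hasDerivAt_gF z).differentiableAt, ?_⟩
  have hd : deriv gF = gF' := funext fun z => (hasDerivAt_gF z).deriv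
  rw [hd]; exact continuous_gF'

lemma gF'_le (z : ℝ) : gF' z ≤ (3 : ℝ) ^ ((3 : ℝ) / 4) / 2 := by
  set b : ℝ := (3 : ℝ) ^ ((1 : ℝ) / 4) with hbdef
  have hb : 0 < b := Real.rpow_pos_of_pos (by norm_num) _
  have hb4 : b ^ (4 : ℕ) = 3 := by
    rw [hbdef, ← Real.rpow_natCast ((3:ℝ) ^ ((1:ℝ)/4)) 4, ← Real.rpow_mul (by norm_num : (0:ℝ) ≤ 3)]
    norm_num
  have ha : (3 : ℝ) ^ ((3 : ℝ) / 4) = b ^ (3 : ℕ) := by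
    rw [hbdef, ← Real.rpow_natCast ((3:ℝ) ^ ((1:ℝ)/4)) 3, ← Real.rpow_mul (by norm_num : (0:ℝ) ≤ 3)]
    norm_num
  rcases le_or_gt z 0 with hz | hz
  · have h0 : gF' z = 0 := by simp [gF', max_eq_right hz]
    rw [h0]; positivity
  · have h0 : gF' z = 2 * z / (1 + z ^ 4) := by rw [gF', max_eq_left hz.le]
    rw [h0, ha, div_le_div_iff₀ (by positivity) (by norm_num)]
    have key : 0 ≤ (b * z - 1) ^ 2 * ((b * z) ^ 2 + 2 * (b * z) + 3) := by
      apply mul_nonneg (sq_nonneg _)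
      nlinarith [sq_nonneg (b * z + 1)]
    nlinarith [key, hb, hb4, hz.le, sq_nonneg (b * z)]

lemma gF'_sq_le (z : ℝ) : gF' z ^ 2 ≤ 4 * gF z := by
  rcases le_or_gt z 0 with hz | hz
  · have h0 : gF' z = 0 := by simp [gF', max_eq_right hz]
    rw [h0]
    have := gF_nonneg z
    nlinarith
  · have h0 : gF' z = 2 * z / (1 + z ^ 4) := by rw [gF', max_eq_left hz.le]
    have h1 : gF z = Real.arctan (z ^ 2) := by simp [gF, hz.le]
    have hA : z ^ 2 / (1 + (z ^ 2) ^ 2) ≤ Real.arctan (z ^ 2) :=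
      self_div_le_arctan (by positivity)
    rw [h0, h1, div_pow, div_le_iff₀ (by positivity)]
    have hA' : z ^ 2 ≤ Real.arctan (z ^ 2) * (1 + z ^ 4) := by
      rw [div_le_iff₀ (by positivity : (0:ℝ) < 1 + (z^2)^2)] at hA
      nlinarith [hA]
    have hat : 0 ≤ Real.arctan (z ^ 2) := arctan_nonneg' (by positivity)
    nlinarith [hA', hat, sq_nonneg z, sq_nonneg (z ^ 2), pow_pos (by positivity : (0:ℝ) < 1 + z^4) 2]

lemma one_add_rpow_le {t N : ℝ} (ht : 0 ≤ t) (hN : 1 ≤ N) : 1 + t ^ N ≤ (1 + t) ^ N := by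
  have h := NNReal.add_rpow_le_rpow_add (1 : ℝ≥0) (⟨t, ht⟩ : ℝ≥0) hN
  have h2 := (NNReal.coe_le_coe).2 h
  push_cast at h2
  rw [Real.one_rpow] at h2
  exact h2

lemma sq_rpow_half (t : ℝ) (ht : 0 ≤ t) (M : ℝ) : ((t ^ 2 : ℝ)) ^ (M / 2) = t ^ M := by
  rw [← Real.rpow_natCast t 2, ← Real.rpow_mul ht]
  congr 1
  push_cast
  ring

variable {F : Type*} [NormedAddCommGroup F] [InnerProductSpace ℝ F] [CompleteSpace F]

lemma hasGradientAt_aux (N : ℝ) (hN : 1 ≤ N) (c : ℝ) {r : F} (hr : r ≠ 0) :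
    HasGradientAt (fun r' : F => c * ((1 + ‖r'‖ ^ N) ^ ((1:ℝ) / N) - 1))
      ((c * ((1 + ‖r‖ ^ N) ^ ((1:ℝ) / N - 1) * ‖r‖ ^ (N - 2))) • r) r := by
  have ht : 0 < ‖r‖ := norm_pos_iff.mpr hr
  have hN0 : N ≠ 0 := by linarith
  have hs : 0 < ‖r‖ ^ 2 := by positivity
  have hbase : 0 < 1 + (‖r‖ ^ 2 : ℝ) ^ (N / 2) := by positivity
  have hinner : HasDerivAt (fun s : ℝ => 1 + s ^ (N / 2))
      (N / 2 * (‖r‖ ^ 2 : ℝ) ^ (N / 2 - 1)) (‖r‖ ^ 2) :=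
    (Real.hasDerivAt_rpow_const (Or.inl hs.ne')).const_add 1
  have houter : HasDerivAt (fun u : ℝ => u ^ ((1:ℝ) / N))
      ((1:ℝ) / N * (1 + (‖r‖ ^ 2 : ℝ) ^ (N / 2)) ^ ((1:ℝ) / N - 1))
      (1 + (‖r‖ ^ 2 : ℝ) ^ (N / 2)) :=
    Real.hasDerivAt_rpow_const (Or.inl hbase.ne')
  have hphi : HasDerivAt (fun s : ℝ => c * ((1 + s ^ (N / 2)) ^ ((1:ℝ) / N) - 1))
      (c * ((1:ℝ) / N * (1 + (‖r‖ ^ 2 : ℝ) ^ (N / 2)) ^ ((1:ℝ) / N - 1)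
        * (N / 2 * (‖r‖ ^ 2 : ℝ) ^ (N / 2 - 1)))) (‖r‖ ^ 2) := by
    have := ((houter.comp (‖r‖ ^ 2) hinner).sub_const 1).const_mul c
    simpa [Function.comp, mul_assoc] using this
  have hq : HasFDerivAt (fun r' : F => ‖r'‖ ^ 2) (2 • (innerSL ℝ r)) r :=
    (hasStrictFDerivAt_norm_sq r).hasFDerivAt
  have hcomp := hphi.comp_hasFDerivAt r hq
  have hfun : ((fun s : ℝ => c * ((1 + s ^ (N / 2)) ^ ((1:ℝ) / N) - 1)) ∘ (fun r' : F => ‖r'‖ ^ 2))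
      = fun r' : F => c * ((1 + ‖r'‖ ^ N) ^ ((1:ℝ) / N) - 1) := by
    funext r'
    simp only [Function.comp_apply]
    rw [sq_rpow_half _ (norm_nonneg r')]
  rw [hfun] at hcomp
  rw [hasGradientAt_iff_hasFDerivAt]
  have hc2 : c * ((1 + ‖r‖ ^ N) ^ ((1:ℝ) / N - 1) * ‖r‖ ^ (N - 2))
      = 2 * (c * ((1:ℝ) / N * (1 + (‖r‖ ^ 2 : ℝ) ^ (N / 2)) ^ ((1:ℝ) / N - 1)
        * (N / 2 * (‖r‖ ^ 2 : ℝ) ^ (N / 2 - 1)))) := by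
    rw [sq_rpow_half _ (norm_nonneg r)]
    rw [show ((‖r‖ ^ 2 : ℝ)) ^ (N / 2 - 1) = ‖r‖ ^ (N - 2) by
      rw [← Real.rpow_natCast ‖r‖ 2, ← Real.rpow_mul ht.le]; congr 1; push_cast; ring]
    field_simp
  have heq : (InnerProductSpace.toDual ℝ F)
      ((c * ((1 + ‖r‖ ^ N) ^ ((1:ℝ) / N - 1) * ‖r‖ ^ (N - 2))) • r)
      = (c * ((1:ℝ) / N * (1 + (‖r‖ ^ 2 : ℝ) ^ (N / 2)) ^ ((1:ℝ) / N - 1)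
        * (N / 2 * (‖r‖ ^ 2 : ℝ) ^ (N / 2 - 1)))) • (2 • (innerSL ℝ r)) := by
    ext y
    simp only [InnerProductSpace.toDual_apply_apply, ContinuousLinearMap.smul_apply, innerSL_apply_apply,
      real_inner_smul_left, smul_eq_mul]
    rw [hc2]
    ring
  rw [heq]
  exact hcomp

lemma fv_nonneg {N t : ℝ} (hN : 1 ≤ N) (ht : 0 ≤ t) :
    0 ≤ (1 + t ^ N) ^ ((1:ℝ) / N) - 1 := by
  have h1 : (1:ℝ) ≤ 1 + t ^ N := by
    have : (0:ℝ) ≤ t ^ N := Real.rpow_nonneg ht N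
    linarith
  have := Real.one_le_rpow h1 (by positivity : (0:ℝ) ≤ (1:ℝ)/N)
  linarith

lemma fv_le_tN {N t : ℝ} (hN : 1 ≤ N) (ht : 0 ≤ t) :
    (1 + t ^ N) ^ ((1:ℝ) / N) - 1 ≤ t ^ N := by
  have h1 : (1:ℝ) ≤ 1 + t ^ N := by
    have : (0:ℝ) ≤ t ^ N := Real.rpow_nonneg ht N
    linarith
  have h2 : (1 + t ^ N) ^ ((1:ℝ) / N) ≤ (1 + t ^ N) ^ (1:ℝ) :=
    Real.rpow_le_rpow_of_exponent_le h1 (by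
      rw [div_le_one (by linarith : (0:ℝ) < N)]; exact hN)
  rw [Real.rpow_one] at h2
  linarith

lemma fv_le_t {N t : ℝ} (hN : 1 ≤ N) (ht : 0 ≤ t) :
    (1 + t ^ N) ^ ((1:ℝ) / N) - 1 ≤ t := by
  have hN0 : N ≠ 0 := by linarith
  have h1 : (1 + t ^ N) ^ ((1:ℝ) / N) ≤ ((1 + t) ^ N) ^ ((1:ℝ) / N) :=
    Real.rpow_le_rpow (by positivity) (one_add_rpow_le ht hN) (by positivity)
  have h2 : ((1 + t) ^ N) ^ ((1:ℝ) / N) = 1 + t := by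
    rw [← Real.rpow_mul (by linarith), mul_one_div, div_self hN0, Real.rpow_one]
  rw [h2] at h1
  linarith

lemma fv_le_pow {N t : ℝ} (hN : 2 ≤ N) (ht : 0 < t) :
    (1 + t ^ N) ^ ((1:ℝ) / N) - 1 ≤ t ^ (N - 1) := by
  have hN1 : 1 ≤ N := by linarith
  rcases le_total t 1 with h | h
  · have h1 := fv_le_tN hN1 ht.le
    have h2 : t ^ N ≤ t ^ (N - 1) :=
      Real.rpow_le_rpow_of_exponent_ge ht h (by linarith)
    linarith
  · have h1 := fv_le_t hN1 ht.le
    have h2 : t ^ (1:ℝ) ≤ t ^ (N - 1) :=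
      Real.rpow_le_rpow_of_exponent_le h (by linarith)
    rw [Real.rpow_one] at h2
    linarith

lemma key_ineq {N γ t : ℝ} (hN : 3 ≤ N) (hγpos : 0 < γ)
    (hγ : γ ≤ (2:ℝ) ^ ((1 - 3 * N) / N)) (ht : 0 < t) :
    4 * γ * ((1 + t ^ N) ^ ((1:ℝ) / N) - 1) ^ 2
      ≤ (1 + t ^ N) ^ ((1:ℝ) / N - 1) * t ^ (2 * N - 2) := by
  have hN0 : (0:ℝ) < N := by linarith
  have hN1 : 1 ≤ N := by linarith
  have hfv0 : 0 ≤ (1 + t ^ N) ^ ((1:ℝ) / N) - 1 := fv_nonneg hN1 ht.le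
  have htN : (0:ℝ) < t ^ N := Real.rpow_pos_of_pos ht N
  have hb : (0:ℝ) < 1 + t ^ N := by linarith
  have he_neg : (1:ℝ) / N - 1 ≤ 0 := by
    have : (1:ℝ) / N ≤ 1 := by rw [div_le_one hN0]; linarith
    linarith
  -- 4γ ≤ 2 ^ (1/N - 1)
  have h4γ : 4 * γ ≤ (2:ℝ) ^ ((1:ℝ) / N - 1) := by
    have he : (1:ℝ) / N - 1 = (1 - 3 * N) / N + 2 := by
      field_simp
      ring
    have h22 : (2:ℝ) ^ ((2:ℝ)) = 4 := by
      have h := Real.rpow_natCast (2:ℝ) 2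
      push_cast at h
      rw [h]
      norm_num
    have h2 : (2:ℝ) ^ ((1:ℝ) / N - 1) = (2:ℝ) ^ ((1 - 3 * N) / N) * 4 := by
      rw [he, Real.rpow_add (by norm_num : (0:ℝ) < 2), h22]
    rw [h2]
    nlinarith [hγ]
  have hc2 : (0:ℝ) < (2:ℝ) ^ ((1:ℝ) / N - 1) := Real.rpow_pos_of_pos (by norm_num) _
  rcases le_total t 1 with h | h
  · -- t ≤ 1
    have e1 : ((1 + t ^ N) ^ ((1:ℝ) / N) - 1) ^ 2 ≤ (t ^ N) ^ (2:ℕ) :=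
      pow_le_pow_left₀ hfv0 (fv_le_tN hN1 ht.le) 2
    have e2 : (t ^ N) ^ (2:ℕ) = t ^ (N * 2) := by
      rw [← Real.rpow_natCast (t ^ N) 2, ← Real.rpow_mul ht.le]
      norm_num
    have e3 : t ^ (N * 2) ≤ t ^ (2 * N - 2) :=
      Real.rpow_le_rpow_of_exponent_ge ht h (by linarith)
    have hPge : (2:ℝ) ^ ((1:ℝ) / N - 1) ≤ (1 + t ^ N) ^ ((1:ℝ) / N - 1) := by
      have htN1 : t ^ N ≤ 1 := Real.rpow_le_one ht.le h hN0.le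
      exact Real.rpow_le_rpow_of_nonpos hb (by linarith) he_neg
    calc 4 * γ * ((1 + t ^ N) ^ ((1:ℝ) / N) - 1) ^ 2
        ≤ (2:ℝ) ^ ((1:ℝ) / N - 1) * t ^ (2 * N - 2) := by
          apply mul_le_mul h4γ _ (by positivity) hc2.le
          calc ((1 + t ^ N) ^ ((1:ℝ) / N) - 1) ^ 2 ≤ t ^ (N * 2) := by rw [← e2]; exact e1
            _ ≤ t ^ (2 * N - 2) := e3
      _ ≤ (1 + t ^ N) ^ ((1:ℝ) / N - 1) * t ^ (2 * N - 2) :=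
          mul_le_mul_of_nonneg_right hPge (Real.rpow_nonneg ht.le _)
  · -- 1 ≤ t
    have e1 : ((1 + t ^ N) ^ ((1:ℝ) / N) - 1) ^ 2 ≤ t ^ (2:ℕ) :=
      pow_le_pow_left₀ hfv0 (fv_le_t hN1 ht.le) 2
    have htN1 : (1:ℝ) ≤ t ^ N := by
      have := Real.rpow_le_rpow (by norm_num : (0:ℝ) ≤ 1) h hN0.le
      simpa using this
    have hPge : (2:ℝ) ^ ((1:ℝ) / N - 1) * t ^ (1 - N)
        ≤ (1 + t ^ N) ^ ((1:ℝ) / N - 1) := by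
      have hle : 1 + t ^ N ≤ 2 * t ^ N := by linarith
      have h1 : (2 * t ^ N) ^ ((1:ℝ) / N - 1) ≤ (1 + t ^ N) ^ ((1:ℝ) / N - 1) :=
        Real.rpow_le_rpow_of_nonpos hb hle he_neg
      have h2 : (2 * t ^ N) ^ ((1:ℝ) / N - 1)
          = (2:ℝ) ^ ((1:ℝ) / N - 1) * t ^ (1 - N) := by
        rw [Real.mul_rpow (by norm_num) htN.le]
        congr 1
        rw [← Real.rpow_mul ht.le]
        congr 1
        field_simp
      rw [h2] at h1
      exact h1
    have s2 : t ^ ((2:ℕ):ℝ) ≤ t ^ (N - 1) :=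
      Real.rpow_le_rpow_of_exponent_le h (by push_cast; linarith)
    have s2' : t ^ (2:ℕ) ≤ t ^ (N - 1) := by
      rw [← Real.rpow_natCast t 2]; exact s2
    have s3 : (2:ℝ) ^ ((1:ℝ) / N - 1) * t ^ (N - 1)
        = ((2:ℝ) ^ ((1:ℝ) / N - 1) * t ^ (1 - N)) * t ^ (2 * N - 2) := by
      rw [mul_assoc, ← Real.rpow_add ht]
      congr 2
      ring
    calc 4 * γ * ((1 + t ^ N) ^ ((1:ℝ) / N) - 1) ^ 2
        ≤ (2:ℝ) ^ ((1:ℝ) / N - 1) * t ^ (N - 1) := by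
          apply mul_le_mul h4γ (le_trans e1 s2') (by positivity) hc2.le
      _ = ((2:ℝ) ^ ((1:ℝ) / N - 1) * t ^ (1 - N)) * t ^ (2 * N - 2) := s3
      _ ≤ (1 + t ^ N) ^ ((1:ℝ) / N - 1) * t ^ (2 * N - 2) :=
          mul_le_mul_of_nonneg_right hPge (Real.rpow_nonneg ht.le _)


end CEAux

set_option maxHeartbeats 1000000 in
/-- the explicit potential `V` giving a counterexample to quadratic
rigidity in dimension `n ≥ 4`, satisfies the three properties (V0)-(V2). -/
theorem counterexample_potential_properties
    (n : ℕ) (hn : 4 ≤ n) (γ : ℝ) (hγpos : 0 < γ)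
    (hγ : γ ≤ min (2 / (Real.pi + (3 : ℝ) ^ ((3 : ℝ) / 4)))
      ((2 : ℝ) ^ (((4 : ℝ) - 3 * (n : ℝ)) / ((n : ℝ) - 1))))
    (V : EuclideanSpace ℝ (Fin (n - 1)) → ℝ → ℝ)
    (hV : ∀ r z, V r z =
      if 0 ≤ z then γ * ((1 + ‖r‖ ^ ((n : ℝ) - 1)) ^ ((1 : ℝ) / ((n : ℝ) - 1)) - 1)
        * Real.arctan (z ^ 2) else 0) :
    -- V is C¹ away from the axis {r = 0}
    ContDiffOn ℝ 1 (fun p : EuclideanSpace ℝ (Fin (n - 1)) × ℝ => V p.1 p.2)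
      {p : EuclideanSpace ℝ (Fin (n - 1)) × ℝ | p.1 ≠ 0}
    -- (V0): V vanishes for z ≤ 0
    ∧ (∀ r z, z ≤ 0 → V r z = 0)
    -- (V1): |∇V| ≤ |r|^{n-2}
    ∧ (∀ (r : EuclideanSpace ℝ (Fin (n - 1))), r ≠ 0 → ∀ z : ℝ,
      Real.sqrt (‖gradient (fun r' => V r' z) r‖ ^ 2 + (deriv (V r) z) ^ 2)
        ≤ ‖r‖ ^ ((n : ℝ) - 2))
    -- (V2): r · ∇_r V ≥ |r|^{3-n} (∂_z V)²
    ∧ (∀ (r : EuclideanSpace ℝ (Fin (n - 1))), r ≠ 0 → ∀ z : ℝ,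
      ‖r‖ ^ ((3 : ℝ) - (n : ℝ)) * (deriv (V r) z) ^ 2
        ≤ ⟪r, gradient (fun r' => V r' z) r⟫) := by
  have hn4 : (4 : ℝ) ≤ (n : ℝ) := by exact_mod_cast hn
  set N : ℝ := (n : ℝ) - 1 with hNdef
  have hN3 : (3 : ℝ) ≤ N := by rw [hNdef]; linarith
  have hN1 : (1 : ℝ) ≤ N := by linarith
  have hN0 : (0 : ℝ) < N := by linarith
  -- rewriting V
  have hVfun : ∀ z : ℝ, (fun r' : EuclideanSpace ℝ (Fin (n - 1)) => V r' z)
      = fun r' : EuclideanSpace ℝ (Fin (n - 1)) => (γ * gF z) * ((1 + ‖r'‖ ^ N) ^ ((1:ℝ) / N) - 1) := by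
    intro z
    funext r'
    rw [hV r' z]
    unfold gF
    split_ifs <;> ring
  have hVz : ∀ r : EuclideanSpace ℝ (Fin (n - 1)), V r
      = fun z : ℝ => (γ * ((1 + ‖r‖ ^ N) ^ ((1:ℝ) / N) - 1)) * gF z := by
    intro r
    funext z
    rw [hV r z]
    unfold gF
    split_ifs <;> ring
  -- gradient and deriv values
  have hgradval : ∀ (r : EuclideanSpace ℝ (Fin (n - 1))), r ≠ 0 → ∀ z : ℝ, gradient (fun r' : EuclideanSpace ℝ (Fin (n - 1)) => V r' z) r
      = ((γ * gF z) * ((1 + ‖r‖ ^ N) ^ ((1:ℝ) / N - 1) * ‖r‖ ^ (N - 2))) • r := by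
    intro r hr z
    have h := hasGradientAt_aux N hN1 (γ * gF z) hr
    rw [← hVfun z] at h
    exact h.gradient
  have hderivval : ∀ (r : EuclideanSpace ℝ (Fin (n - 1))) (z : ℝ),
      deriv (V r) z = (γ * ((1 + ‖r‖ ^ N) ^ ((1:ℝ) / N) - 1)) * gF' z := by
    intro r z
    rw [hVz r]
    exact ((hasDerivAt_gF z).const_mul _).deriv
  refine ⟨?_, ?_, ?_, ?_⟩
  · -- C¹
    have hfun : (fun p : EuclideanSpace ℝ (Fin (n - 1)) × ℝ => V p.1 p.2)
        = fun p : EuclideanSpace ℝ (Fin (n - 1)) × ℝ => (γ * ((1 + ‖p.1‖ ^ N) ^ ((1:ℝ) / N) - 1)) * gF p.2 := by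
      funext p
      rw [hV p.1 p.2]
      unfold gF
      split_ifs <;> ring
    rw [hfun]
    intro p hp
    apply ContDiffAt.contDiffWithinAt
    have hp1 : p.1 ≠ 0 := hp
    have htp : (0:ℝ) < ‖p.1‖ := norm_pos_iff.mpr hp1
    have h1 : ContDiffAt ℝ 1 (fun q : EuclideanSpace ℝ (Fin (n - 1)) × ℝ => ‖q.1‖) p :=
      (contDiffAt_norm ℝ hp1).comp p contDiff_fst.contDiffAt
    have h2 : ContDiffAt ℝ 1 (fun q : EuclideanSpace ℝ (Fin (n - 1)) × ℝ => ‖q.1‖ ^ N) p :=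
      ContDiffAt.comp (g := fun x : ℝ => x ^ N) p (Real.contDiffAt_rpow_const_of_ne htp.ne') h1
    have h3 : ContDiffAt ℝ 1 (fun q : EuclideanSpace ℝ (Fin (n - 1)) × ℝ => (1 + ‖q.1‖ ^ N) ^ ((1:ℝ) / N)) p := by
      have hb : (0:ℝ) < 1 + ‖p.1‖ ^ N := by positivity
      exact (Real.contDiffAt_rpow_const_of_ne hb.ne').comp p (contDiffAt_const.add h2)
    have h5 : ContDiffAt ℝ 1 (fun q : EuclideanSpace ℝ (Fin (n - 1)) × ℝ => gF q.2) p :=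
      (contDiff_gF.comp contDiff_snd).contDiffAt
    exact (contDiffAt_const.mul (h3.sub contDiffAt_const)).mul h5
  · -- V0
    intro r z hz
    rw [hV r z]
    split_ifs with h
    · have hz0 : z = 0 := le_antisymm hz h
      subst hz0
      simp
    · rfl
  · -- V1
    intro r hr z
    have ht : (0:ℝ) < ‖r‖ := norm_pos_iff.mpr hr
    have hexp : (n : ℝ) - 2 = N - 1 := by rw [hNdef]; ring
    rw [hexp, hgradval r hr z, hderivval r z]
    set t : ℝ := ‖r‖ with htdef
    set P : ℝ := (1 + t ^ N) ^ ((1:ℝ) / N - 1) with hPdef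
    set fv : ℝ := (1 + t ^ N) ^ ((1:ℝ) / N) - 1 with hfvdef
    have hg0 := gF_nonneg z
    have hg'0 := gF'_nonneg z
    have hP0 : 0 ≤ P := Real.rpow_nonneg (by positivity) _
    have hfv0 : 0 ≤ fv := fv_nonneg hN1 ht.le
    have hnorm : ‖((γ * gF z) * (P * t ^ (N - 2))) • r‖
        = (γ * gF z) * (P * t ^ (N - 2)) * t := by
      rw [norm_smul, Real.norm_eq_abs, abs_of_nonneg (by positivity)]
    rw [hnorm]
    set A : ℝ := (γ * gF z) * (P * t ^ (N - 2)) * t with hAdef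
    set B : ℝ := (γ * fv) * gF' z with hBdef
    have hA0 : 0 ≤ A := by positivity
    have hB0 : 0 ≤ B := by positivity
    have step1 : Real.sqrt (A ^ 2 + B ^ 2) ≤ A + B := by
      have h1 : Real.sqrt (A ^ 2 + B ^ 2) ≤ Real.sqrt ((A + B) ^ 2) :=
        Real.sqrt_le_sqrt (by nlinarith [mul_nonneg hA0 hB0])
      rwa [Real.sqrt_sq (by positivity)] at h1
    have htpow : t ^ (N - 2) * t = t ^ (N - 1) := by
      nth_rewrite 2 [← Real.rpow_one t]
      rw [← Real.rpow_add ht]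
      congr 1
      ring
    have hP1 : P ≤ 1 := by
      apply Real.rpow_le_one_of_one_le_of_nonpos
      · have : (0:ℝ) ≤ t ^ N := Real.rpow_nonneg ht.le N
        linarith
      · have : (1:ℝ) / N ≤ 1 := by rw [div_le_one hN0]; linarith
        linarith
    have step2 : A ≤ γ * (Real.pi / 2) * t ^ (N - 1) := by
      calc A = (γ * gF z) * (P * t ^ (N - 2)) * t := hAdef
        _ ≤ (γ * (Real.pi / 2)) * (1 * t ^ (N - 2)) * t := by
            gcongr <;> first
              | exact gF_le z
              | exact hP1
        _ = γ * (Real.pi / 2) * (t ^ (N - 2) * t) := by ring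
        _ = γ * (Real.pi / 2) * t ^ (N - 1) := by rw [htpow]
    have step3 : B ≤ γ * ((3:ℝ) ^ ((3:ℝ)/4) / 2) * t ^ (N - 1) := by
      have hfvT : fv ≤ t ^ (N - 1) := fv_le_pow (by linarith) ht
      calc B = (γ * fv) * gF' z := hBdef
        _ ≤ (γ * t ^ (N - 1)) * ((3:ℝ) ^ ((3:ℝ)/4) / 2) := by
            gcongr <;> first
              | exact hfvT
              | exact gF'_le z
        _ = γ * ((3:ℝ) ^ ((3:ℝ)/4) / 2) * t ^ (N - 1) := by ring
    have ha0 : (0:ℝ) < (3:ℝ) ^ ((3:ℝ)/4) := Real.rpow_pos_of_pos (by norm_num) _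
    have hπa : (0:ℝ) < Real.pi + (3:ℝ) ^ ((3:ℝ)/4) := by
      have := Real.pi_pos
      linarith
    have hγ1 : γ * (Real.pi + (3:ℝ) ^ ((3:ℝ)/4)) ≤ 2 := by
      have h := hγ.trans (min_le_left _ _)
      exact (le_div_iff₀ hπa).mp h
    have hT0 : (0:ℝ) ≤ t ^ (N - 1) := Real.rpow_nonneg ht.le _
    calc Real.sqrt (A ^ 2 + B ^ 2) ≤ A + B := step1
      _ ≤ γ * (Real.pi / 2) * t ^ (N - 1) + γ * ((3:ℝ) ^ ((3:ℝ)/4) / 2) * t ^ (N - 1) := by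
          linarith
      _ ≤ t ^ (N - 1) := by nlinarith [hγ1, hT0]
  · -- V2
    intro r hr z
    have ht : (0:ℝ) < ‖r‖ := norm_pos_iff.mpr hr
    have hexp : (3 : ℝ) - (n : ℝ) = 2 - N := by rw [hNdef]; ring
    rw [hexp, hgradval r hr z, hderivval r z]
    set t : ℝ := ‖r‖ with htdef
    set P : ℝ := (1 + t ^ N) ^ ((1:ℝ) / N - 1) with hPdef
    set fv : ℝ := (1 + t ^ N) ^ ((1:ℝ) / N) - 1 with hfvdef
    have hg0 := gF_nonneg z
    have hP0 : 0 ≤ P := Real.rpow_nonneg (by positivity) _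
    have hfv0 : 0 ≤ fv := fv_nonneg hN1 ht.le
    have hinner : ⟪r, ((γ * gF z) * (P * t ^ (N - 2))) • r⟫
        = (γ * gF z) * (P * t ^ (N - 2)) * t ^ (2:ℕ) := by
      rw [real_inner_smul_right, real_inner_self_eq_norm_sq]
    rw [hinner]
    have hγ2 : γ ≤ (2:ℝ) ^ ((1 - 3 * N) / N) := by
      have h := hγ.trans (min_le_right _ _)
      have he : ((4:ℝ) - 3 * (n:ℝ)) / ((n:ℝ) - 1) = (1 - 3 * N) / N := by
        rw [hNdef]
        congr 1
        ring
      rwa [he] at h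
    have hkey := key_ineq hN3 hγpos hγ2 ht
    have hgsq := gF'_sq_le z
    have h1 : t ^ (2 - N) * ((γ * fv) * gF' z) ^ 2
        ≤ t ^ (2 - N) * ((γ * fv) ^ 2 * (4 * gF z)) := by
      rw [mul_pow]
      gcongr <;> first
        | exact sq_nonneg _
        | exact hgsq
    have h2 : t ^ (2 - N) * ((γ * fv) ^ 2 * (4 * gF z))
        = (γ * gF z * t ^ (2 - N)) * (4 * γ * fv ^ 2) := by ring
    have h3 : (γ * gF z * t ^ (2 - N)) * (4 * γ * fv ^ 2)
        ≤ (γ * gF z * t ^ (2 - N)) * (P * t ^ (2 * N - 2)) := by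
      apply mul_le_mul_of_nonneg_left hkey (by positivity)
    have h5 : t ^ (2 - N) * t ^ (2 * N - 2) = t ^ N := by
      rw [← Real.rpow_add ht]
      congr 1
      ring
    have h6 : (γ * gF z * t ^ (2 - N)) * (P * t ^ (2 * N - 2))
        = (γ * gF z) * P * (t ^ (2 - N) * t ^ (2 * N - 2)) := by ring
    have h7 : t ^ (N - 2) * t ^ (2:ℕ) = t ^ N := by
      rw [← Real.rpow_natCast t 2, ← Real.rpow_add ht]
      congr 1
      push_cast
      ring
    have h8 : (γ * gF z) * (P * t ^ (N - 2)) * t ^ (2:ℕ)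
        = (γ * gF z) * P * (t ^ (N - 2) * t ^ (2:ℕ)) := by ring
    rw [h8, h7]
    calc t ^ (2 - N) * ((γ * fv) * gF' z) ^ 2
        ≤ (γ * gF z * t ^ (2 - N)) * (P * t ^ (2 * N - 2)) := by
          rw [← h2] at h3
          linarith
      _ = (γ * gF z) * P * t ^ N := by rw [h6, h5]
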